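/- arXiv:2508.17529 — 8 statements merged into one kernel-verified Lean document; each statement's English description precedes it below -/
import Mathlib

section
/- Let {N_ω}_{ω∈Ω} be a family of linear maps on an Ω-associative algebra A satisfying N_ω ∘ N_ω = id_A for all ω ∈ Ω. Then {N_ω} is a Nijenhuis family if and only if {N_ω} is a modified Rota–Baxter family of weight −1, i.e., N_α(a) ·_{α,β} N_β(b) = N_{αβ}(N_α(a) ·_{α,β} b + a ·_{α,β} N_β(b)) − a ·_{α,β} b. -/
/-- A Nijenhuis family on an `Ω`-associative algebra. -/
def NijenhuisFamily {k Ω A : Type*} [Field k] [Semigroup Ω] [AddCommGroup A]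
    [Module k A] (μ : Ω → Ω → A →ₗ[k] A →ₗ[k] A) (N : Ω → A →ₗ[k] A) : Prop :=
  ∀ (α β : Ω) (a b : A),
    μ α β (N α a) (N β b)
      = N (α * β) (μ α β (N α a) b + μ α β a (N β b) - N (α * β) (μ α β a b))

/-- A modified Rota–Baxter family of weight `-1`. -/
def ModifiedRotaBaxterFamilyNegOne {k Ω A : Type*} [Field k] [Semigroup Ω]
    [AddCommGroup A] [Module k A]
    (μ : Ω → Ω → A →ₗ[k] A →ₗ[k] A) (N : Ω → A →ₗ[k] A) : Prop :=
  ∀ (α β : Ω) (a b : A),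
    μ α β (N α a) (N β b)
      = N (α * β) (μ α β (N α a) b + μ α β a (N β b)) - μ α β a b

/-- If `N_ω² = id` then `N` is a Nijenhuis family iff it is a modified
Rota–Baxter family of weight `-1`. -/
theorem nijenhuis_iff_modifiedRotaBaxter_of_involutive
    {k : Type*} [Field k] {Ω : Type*} [Semigroup Ω]
    {A : Type*} [AddCommGroup A] [Module k A]
    (μ : Ω → Ω → A →ₗ[k] A →ₗ[k] A)
    (hassoc : ∀ (α β γ : Ω) (a b c : A),
      μ (α * β) γ (μ α β a b) c = μ α (β * γ) a (μ β γ b c))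
    (N : Ω → A →ₗ[k] A)
    (hinv : ∀ ω : Ω, (N ω).comp (N ω) = LinearMap.id) :
    NijenhuisFamily μ N ↔ ModifiedRotaBaxterFamilyNegOne μ N := by
  have key : ∀ (ω : Ω) (x : A), N ω (N ω x) = x := fun ω x =>
    congrArg (fun f => f x) (hinv ω) |>.trans rfl
  constructor <;> intro h α β a b <;> have := h α β a b <;>
    simpa [map_sub, key] using this
end

section
/- Let (A, {·_{α,β}}, {N_ω}) be a Nijenhuis family Ω-associative algebra. Define a ⋆_{α,β} b := a ·_{α,β} N_β(b) + N_α(a) ·_{α,β} b − N_{αβ}(a ·_{α,β} b). Then the family {⋆_{α,β}} satisfies the Ω-associativity identity (a ⋆_{α,β} b) ⋆_{αβ,γ} c = a ⋆_{α,βγ} (b ⋆_{β,γ} c) for all a, b, c ∈ A and α, β, γ ∈ Ω; hence (A, {⋆_{α,β}}) is an Ω-associative algebra. -/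
/-- The deformed product `a ⋆_{α,β} b := a ·_{α,β} N_β b + N_α a ·_{α,β} b −
N_{αβ}(a ·_{α,β} b)` is `Ω`-associative. -/
theorem star_product_omega_assoc
    {k : Type*} [Field k] {Ω : Type*} [Semigroup Ω]
    {A : Type*} [AddCommGroup A] [Module k A]
    (μ : Ω → Ω → A →ₗ[k] A →ₗ[k] A)
    (hassoc : ∀ (α β γ : Ω) (a b c : A),
      μ (α * β) γ (μ α β a b) c = μ α (β * γ) a (μ β γ b c))
    (N : Ω → A →ₗ[k] A) (hN : NijenhuisFamily μ N) :
    let star : Ω → Ω → A → A → A := fun α β a b =>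
      μ α β a (N β b) + μ α β (N α a) b - N (α * β) (μ α β a b)
    ∀ (α β γ : Ω) (a b c : A),
      star (α * β) γ (star α β a b) c = star α (β * γ) a (star β γ b c) := by
  intro star α β γ a b c
  have key : ∀ (α β : Ω) (a b : A),
      N (α * β) (μ α β a (N β b) + μ α β (N α a) b - N (α * β) (μ α β a b))
        = μ α β (N α a) (N β b) := by
    intro α β a b
    rw [add_comm (μ α β a (N β b)), ← hN]
  simp only [star]
  rw [key, key]
  simp only [map_add, map_sub, LinearMap.add_apply, LinearMap.sub_apply]
  rw [hN (α * β) γ (μ α β a b) c, hN α (β * γ) a (μ β γ b c)]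
  simp only [map_add, map_sub, LinearMap.add_apply, LinearMap.sub_apply, hassoc, mul_assoc]
  abel
end

section
/- Let (A, {·_{α,β}}, {N_ω}) be a Nijenhuis family Ω-associative algebra and define a ⋆_{α,β} b := a ·_{α,β} N_β(b) + N_α(a) ·_{α,β} b − N_{αβ}(a ·_{α,β} b). Then {N_ω} is also a Nijenhuis family on the Ω-associative algebra (A, {⋆_{α,β}}), i.e., N_α(a) ⋆_{α,β} N_β(b) = N_{αβ}(N_α(a) ⋆_{α,β} b + a ⋆_{α,β} N_β(b) − N_{αβ}(a ⋆_{α,β} b)) for all a, b ∈ A, α, β ∈ Ω. -/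
/-- `N` remains a Nijenhuis family for the deformed product `⋆`. -/
theorem nijenhuis_for_star_product
    {k : Type*} [Field k] {Ω : Type*} [Semigroup Ω]
    {A : Type*} [AddCommGroup A] [Module k A]
    (μ : Ω → Ω → A →ₗ[k] A →ₗ[k] A)
    (hassoc : ∀ (α β γ : Ω) (a b c : A),
      μ (α * β) γ (μ α β a b) c = μ α (β * γ) a (μ β γ b c))
    (N : Ω → A →ₗ[k] A) (hN : NijenhuisFamily μ N) :
    let star : Ω → Ω → A → A → A := fun α β a b =>
      μ α β a (N β b) + μ α β (N α a) b - N (α * β) (μ α β a b)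
    ∀ (α β : Ω) (a b : A),
      star α β (N α a) (N β b)
        = N (α * β) (star α β (N α a) b + star α β a (N β b)
            - N (α * β) (star α β a b)) := by
  intro star α β a b
  have h1 := hN α β a (N β b)
  have h2 := hN α β (N α a) b
  have h3 := hN α β a b
  simp only [star]
  rw [h1, h2, h3]
  simp only [map_add, map_sub]
  abel
end

section
/- Let (A, {·_{α,β}}, {N_ω}) be a Nijenhuis family Ω-associative algebra and (M, {N_{M,ω}}) a Nijenhuis family bimodule. Define a ▷_{α,β} m := N_α(a) ·_{α,β} m − N_{M,αβ}(a ·_{α,β} m) and m ◁_{α,β} a := m ·_{α,β} N_β(a) − N_{M,αβ}(m ·_{α,β} a). Then the middle compatibility holds: (a ▷_{α,β} m) ◁_{αβ,γ} b = a ▷_{α,βγ} (m ◁_{β,γ} b) for all a, b ∈ A and m ∈ M. -/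
/-- Middle compatibility `(a ▷ m) ◁ b = a ▷ (m ◁ b)` for the new actions. -/
theorem new_actions_middle_compatibility
    {k : Type*} [Field k] {Ω : Type*} [Semigroup Ω]
    {A : Type*} [AddCommGroup A] [Module k A]
    {M : Type*} [AddCommGroup M] [Module k M]
    (μ : Ω → Ω → A →ₗ[k] A →ₗ[k] A)
    (hassoc : ∀ (α β γ : Ω) (a b c : A),
      μ (α * β) γ (μ α β a b) c = μ α (β * γ) a (μ β γ b c))
    (l : Ω → Ω → A →ₗ[k] M →ₗ[k] M) (r : Ω → Ω → M →ₗ[k] A →ₗ[k] M)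
    (hl : ∀ (α β γ : Ω) (a b : A) (m : M),
      l (α * β) γ (μ α β a b) m = l α (β * γ) a (l β γ b m))
    (hmid : ∀ (α β γ : Ω) (a : A) (m : M) (b : A),
      r (α * β) γ (l α β a m) b = l α (β * γ) a (r β γ m b))
    (hr : ∀ (α β γ : Ω) (m : M) (a b : A),
      r (α * β) γ (r α β m a) b = r α (β * γ) m (μ β γ a b))
    (N : Ω → A →ₗ[k] A) (hN : NijenhuisFamily μ N)
    (NM : Ω → M →ₗ[k] M)
    (hNMl : ∀ (α β : Ω) (a : A) (m : M),
      l α β (N α a) (NM β m)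
        = NM (α * β) (l α β a (NM β m) + l α β (N α a) m
            - NM (α * β) (l α β a m)))
    (hNMr : ∀ (α β : Ω) (m : M) (a : A),
      r α β (NM α m) (N β a)
        = NM (α * β) (r α β m (N β a) + r α β (NM α m) a
            - NM (α * β) (r α β m a))) :
    let rhd : Ω → Ω → A → M → M := fun α β a m =>
      l α β (N α a) m - NM (α * β) (l α β a m)
    let lhd : Ω → Ω → M → A → M := fun α β m a =>
      r α β m (N β a) - NM (α * β) (r α β m a)
    ∀ (α β γ : Ω) (a : A) (m : M) (b : A),
      lhd (α * β) γ (rhd α β a m) b = rhd α (β * γ) a (lhd β γ m b) := by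
  intro rhd lhd α β γ a m b
  simp only [rhd, lhd, map_sub, LinearMap.sub_apply]
  rw [hmid, hNMr, hmid, hNMl, hmid, mul_assoc]
  simp only [map_add, map_sub]
  rw [hmid]
  abel
end

section
/- Let (A, {·_{α,β}}, {N_ω}) be a Nijenhuis family Ω-associative algebra and (M, {N_{M,ω}}) a Nijenhuis family bimodule. Define a ▷_{α,β} m := N_α(a) ·_{α,β} m − N_{M,αβ}(a ·_{α,β} m). Then the Nijenhuis compatibility holds for the new left action: N_α(a) ▷_{α,β} N_{M,β}(m) = N_{M,αβ}(a ▷_{α,β} N_{M,β}(m) + N_α(a) ▷_{α,β} m − N_{M,αβ}(a ▷_{α,β} m)) for all a ∈ A and m ∈ M. -/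
/-- The Nijenhuis compatibility for the new left action `▷`. -/
theorem new_left_action_nijenhuis_compatibility
    {k : Type*} [Field k] {Ω : Type*} [Semigroup Ω]
    {A : Type*} [AddCommGroup A] [Module k A]
    {M : Type*} [AddCommGroup M] [Module k M]
    (μ : Ω → Ω → A →ₗ[k] A →ₗ[k] A)
    (hassoc : ∀ (α β γ : Ω) (a b c : A),
      μ (α * β) γ (μ α β a b) c = μ α (β * γ) a (μ β γ b c))
    (l : Ω → Ω → A →ₗ[k] M →ₗ[k] M) (r : Ω → Ω → M →ₗ[k] A →ₗ[k] M)
    (hl : ∀ (α β γ : Ω) (a b : A) (m : M),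
      l (α * β) γ (μ α β a b) m = l α (β * γ) a (l β γ b m))
    (hmid : ∀ (α β γ : Ω) (a : A) (m : M) (b : A),
      r (α * β) γ (l α β a m) b = l α (β * γ) a (r β γ m b))
    (hr : ∀ (α β γ : Ω) (m : M) (a b : A),
      r (α * β) γ (r α β m a) b = r α (β * γ) m (μ β γ a b))
    (N : Ω → A →ₗ[k] A) (hN : NijenhuisFamily μ N)
    (NM : Ω → M →ₗ[k] M)
    (hNMl : ∀ (α β : Ω) (a : A) (m : M),
      l α β (N α a) (NM β m)
        = NM (α * β) (l α β a (NM β m) + l α β (N α a) m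
            - NM (α * β) (l α β a m)))
    (hNMr : ∀ (α β : Ω) (m : M) (a : A),
      r α β (NM α m) (N β a)
        = NM (α * β) (r α β m (N β a) + r α β (NM α m) a
            - NM (α * β) (r α β m a))) :
    let rhd : Ω → Ω → A → M → M := fun α β a m =>
      l α β (N α a) m - NM (α * β) (l α β a m)
    ∀ (α β : Ω) (a : A) (m : M),
      rhd α β (N α a) (NM β m)
        = NM (α * β) (rhd α β a (NM β m) + rhd α β (N α a) m
            - NM (α * β) (rhd α β a m)) := by
  intro rhd α β a m
  simp only [rhd]
  rw [hNMl α β (N α a) m, hNMl α β a m]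
  simp only [map_add, map_sub]
  abel
end

section
/- Let (A, μ, N) be a Nijenhuis family Ω-associative algebra, and let ψ_t = id + ψ₁ t + ... be a formal isomorphism between two one-parameter formal deformations (A[[t]], μ'_t, N'_t) and (A[[t]], μ_t, N_t). Then the infinitesimals satisfy μ'_{1,α,β} = μ_{1,α,β} + μ_{α,β}∘(id⊗ψ_{1,β}) − ψ_{1,αβ}∘μ_{α,β} + μ_{α,β}∘(ψ_{1,α}⊗id) and N'_{1,ω} = N_{1,ω} + N_ω∘ψ_{1,ω} − ψ_{1,ω}∘N_ω. Hence (μ'₁, N'₁) − (μ₁, N₁) = d¹(ψ₁, 0), so the infinitesimals of equivalent deformations are cohomologous in H²_NFA(A). -/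
/-- If `ψ_t = id + ψ₁ t + ⋯` is a formal isomorphism between two one-parameter
formal deformations `(μ'_t, N'_t)` and `(μ_t, N_t)` of a Nijenhuis family
`Ω`-associative algebra `(A, μ, N)`, then the infinitesimals differ by the
coboundary `d¹(ψ₁, 0)`:
`μ'₁ = μ₁ + μ∘(id⊗ψ₁) − ψ₁∘μ + μ∘(ψ₁⊗id)` and `N'₁ = N₁ + N∘ψ₁ − ψ₁∘N`. -/
theorem equivalent_deformations_cohomologous_infinitesimals
    {k : Type*} [Field k] {Ω : Type*} [Semigroup Ω]
    {A : Type*} [AddCommGroup A] [Module k A]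
    (μ : Ω → Ω → A →ₗ[k] A →ₗ[k] A)
    (hassoc : ∀ (α β γ : Ω) (a b c : A),
      μ (α * β) γ (μ α β a b) c = μ α (β * γ) a (μ β γ b c))
    (N : Ω → A →ₗ[k] A) (hN : NijenhuisFamily μ N)
    (μt μ't : ℕ → Ω → Ω → A →ₗ[k] A →ₗ[k] A) (Nt N't : ℕ → Ω → A →ₗ[k] A)
    (hμ0 : μt 0 = μ) (hμ'0 : μ't 0 = μ) (hN0 : Nt 0 = N) (hN'0 : N't 0 = N)
    (ψ : ℕ → Ω → A →ₗ[k] A) (hψ0 : ∀ θ : Ω, ψ 0 θ = LinearMap.id)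
    (hiso1 : ∀ (n : ℕ) (α β : Ω) (a b : A),
      ∑ p ∈ Finset.HasAntidiagonal.antidiagonal n, ψ p.1 (α * β) (μ't p.2 α β a b)
        = ∑ p ∈ Finset.HasAntidiagonal.antidiagonal n, ∑ q ∈ Finset.HasAntidiagonal.antidiagonal p.2,
            μt p.1 α β (ψ q.1 α a) (ψ q.2 β b))
    (hiso2 : ∀ (n : ℕ) (ω : Ω) (a : A),
      ∑ p ∈ Finset.HasAntidiagonal.antidiagonal n, ψ p.1 ω (N't p.2 ω a)
        = ∑ p ∈ Finset.HasAntidiagonal.antidiagonal n, Nt p.1 ω (ψ p.2 ω a)) :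
    (∀ (α β : Ω) (a b : A),
      μ't 1 α β a b
        = μt 1 α β a b + μ α β a (ψ 1 β b) - ψ 1 (α * β) (μ α β a b)
            + μ α β (ψ 1 α a) b)
    ∧ (∀ (ω : Ω) (a : A),
      N't 1 ω a = Nt 1 ω a + N ω (ψ 1 ω a) - ψ 1 ω (N ω a)) := by
  constructor
  · intro α β a b
    have h := hiso1 1 α β a b
    simp [show Finset.HasAntidiagonal.antidiagonal 1 = {(0,1),(1,0)} from by decide,
      show Finset.HasAntidiagonal.antidiagonal 0 = {((0:ℕ),(0:ℕ))} from by decide, hψ0, hμ0, hμ'0] at h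
    rw [eq_sub_of_add_eq h]; abel
  · intro ω a
    have h := hiso2 1 ω a
    simp [show Finset.HasAntidiagonal.antidiagonal 1 = {(0,1),(1,0)} from by decide, hψ0, hN0, hN'0] at h
    rw [eq_sub_of_add_eq h]; abel
end

section
/- Let 0 → M → Â → A → 0 be an abelian extension of Nijenhuis family Ω-associative algebras (where all products on M vanish), and let {s_ω} be a family of sections with π_ω ∘ s_ω = id_A. Define a ·_{α,β} m := s_α(a) ·_{α,β} m and m ·_{α,β} a := m ·_{α,β} s_β(a). Then (M, {N_{M,ω}}) is a Nijenhuis family bimodule over (A, {·_{α,β}}, {N_ω}). -/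
/-- Given an abelian extension `0 → M → Â → A → 0` of Nijenhuis family
`Ω`-associative algebras (zero multiplication on `M`) and a family of sections
`s`, the actions `a · m := s_α(a) ·̂ m` and `m · a := m ·̂ s_β(a)` make `M`
a Nijenhuis family bimodule over `(A, μ, N)`; all identities are expressed in
`Â` via the inclusion `i`. -/
theorem abelian_extension_induces_bimodule
    {k : Type*} [Field k] {Ω : Type*} [Semigroup Ω]
    {A : Type*} [AddCommGroup A] [Module k A]
    {Ahat : Type*} [AddCommGroup Ahat] [Module k Ahat]
    {M : Type*} [AddCommGroup M] [Module k M]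
    (μ : Ω → Ω → A →ₗ[k] A →ₗ[k] A)
    (hassoc : ∀ (α β γ : Ω) (a b c : A),
      μ (α * β) γ (μ α β a b) c = μ α (β * γ) a (μ β γ b c))
    (N : Ω → A →ₗ[k] A) (hN : NijenhuisFamily μ N)
    (μh : Ω → Ω → Ahat →ₗ[k] Ahat →ₗ[k] Ahat)
    (hassoch : ∀ (α β γ : Ω) (x y z : Ahat),
      μh (α * β) γ (μh α β x y) z = μh α (β * γ) x (μh β γ y z))
    (Nh : Ω → Ahat →ₗ[k] Ahat) (hNh : NijenhuisFamily μh Nh)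
    (NM : Ω → M →ₗ[k] M)
    (i : M →ₗ[k] Ahat) (π : Ahat →ₗ[k] A)
    (hi : Function.Injective i) (hπ : Function.Surjective π)
    (hexact : LinearMap.range i = LinearMap.ker π)
    (hπmul : ∀ (α β : Ω) (x y : Ahat), π (μh α β x y) = μ α β (π x) (π y))
    (hπN : ∀ (ω : Ω) (x : Ahat), π (Nh ω x) = N ω (π x))
    (hiN : ∀ (ω : Ω) (m : M), Nh ω (i m) = i (NM ω m))
    (hMzero : ∀ (α β : Ω) (u v : M), μh α β (i u) (i v) = 0)
    (s : Ω → A →ₗ[k] Ahat) (hs : ∀ (ω : Ω) (a : A), π (s ω a) = a) :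
    -- the actions preserve M
    (∀ (α β : Ω) (a : A) (m : M), μh α β (s α a) (i m) ∈ LinearMap.range i) ∧
    (∀ (α β : Ω) (m : M) (a : A), μh α β (i m) (s β a) ∈ LinearMap.range i) ∧
    -- the three bimodule axioms
    (∀ (α β γ : Ω) (a b : A) (m : M),
      μh (α * β) γ (s (α * β) (μ α β a b)) (i m)
        = μh α (β * γ) (s α a) (μh β γ (s β b) (i m))) ∧
    (∀ (α β γ : Ω) (a : A) (m : M) (b : A),
      μh (α * β) γ (μh α β (s α a) (i m)) (s γ b)
        = μh α (β * γ) (s α a) (μh β γ (i m) (s γ b))) ∧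
    (∀ (α β γ : Ω) (m : M) (a b : A),
      μh (α * β) γ (μh α β (i m) (s β a)) (s γ b)
        = μh α (β * γ) (i m) (s (β * γ) (μ β γ a b))) ∧
    -- the two Nijenhuis-family-bimodule identities
    (∀ (α β : Ω) (a : A) (m : M),
      μh α β (s α (N α a)) (i (NM β m))
        = Nh (α * β) (μh α β (s α a) (i (NM β m))
            + μh α β (s α (N α a)) (i m)
            - Nh (α * β) (μh α β (s α a) (i m)))) ∧
    (∀ (α β : Ω) (m : M) (a : A),
      μh α β (i (NM α m)) (s β (N β a))
        = Nh (α * β) (μh α β (i m) (s β (N β a))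
            + μh α β (i (NM α m)) (s β a)
            - Nh (α * β) (μh α β (i m) (s β a)))) := by

  have hπi : ∀ m : M, π (i m) = 0 := by
    intro m
    have hm : i m ∈ LinearMap.ker π := hexact ▸ LinearMap.mem_range_self i m
    exact hm
  have hker : ∀ x : Ahat, π x = 0 → ∃ u : M, i u = x := by
    intro x hx
    have hx' : x ∈ LinearMap.ker π := hx
    rw [← hexact] at hx'
    exact hx'
  have hleft : ∀ (α β : Ω) (a : A) (m : M), π (μh α β (s α a) (i m)) = 0 := by
    intro α β a m
    rw [hπmul, hπi]; simp
  have hright : ∀ (α β : Ω) (m : M) (a : A), π (μh α β (i m) (s β a)) = 0 := by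
    intro α β m a
    rw [hπmul, hπi]; simp
  have hideal_l : ∀ (α β : Ω) (m : M) (x : Ahat), μh α β (i m) x ∈ LinearMap.range i := by
    intro α β m x
    rw [hexact]
    show π _ = 0
    rw [hπmul, hπi]; simp
  have hideal_r : ∀ (α β : Ω) (x : Ahat) (m : M), μh α β x (i m) ∈ LinearMap.range i := by
    intro α β x m
    rw [hexact]
    show π _ = 0
    rw [hπmul, hπi]; simp
  refine ⟨fun α β a m => hideal_r α β _ m, fun α β m a => hideal_l α β m _, ?_, ?_, ?_, ?_, ?_⟩
  · intro α β γ a b m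
    obtain ⟨u, hu⟩ := hker (s (α * β) (μ α β a b) - μh α β (s α a) (s β b))
      (by rw [map_sub, hπmul, hs, hs, hs, sub_self])
    have heq : s (α * β) (μ α β a b) = μh α β (s α a) (s β b) + i u := by
      rw [hu]; abel
    rw [heq, map_add, LinearMap.add_apply, hassoch, hMzero, add_zero]
  · intro α β γ a m b
    exact hassoch α β γ _ _ _
  · intro α β γ m a b
    obtain ⟨u, hu⟩ := hker (s (β * γ) (μ β γ a b) - μh β γ (s β a) (s γ b))
      (by rw [map_sub, hπmul, hs, hs, hs, sub_self])
    have heq : s (β * γ) (μ β γ a b) = μh β γ (s β a) (s γ b) + i u := by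
      rw [hu]; abel
    rw [heq, map_add, hassoch, hMzero, add_zero]
  · intro α β a m
    obtain ⟨u, hu⟩ := hker (s α (N α a) - Nh α (s α a))
      (by rw [map_sub, hπN, hs, hs, sub_self])
    have heq : s α (N α a) = Nh α (s α a) + i u := by rw [hu]; abel
    have key := hNh α β (s α a) (i m)
    have hz1 : μh α β (i u) (Nh β (i m)) = 0 := by rw [hiN]; exact hMzero α β u _
    rw [← hiN]
    simp only [heq, map_add, LinearMap.add_apply, hz1, hMzero, add_zero]
    rw [key]; congr 1; abel
  · intro α β m a
    obtain ⟨u, hu⟩ := hker (s β (N β a) - Nh β (s β a))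
      (by rw [map_sub, hπN, hs, hs, sub_self])
    have heq : s β (N β a) = Nh β (s β a) + i u := by rw [hu]; abel
    have key := hNh α β (i m) (s β a)
    have hz1 : μh α β (Nh α (i m)) (i u) = 0 := by rw [hiN]; exact hMzero α β _ u
    rw [← hiN]
    simp only [heq, map_add, LinearMap.add_apply, hz1, hMzero, add_zero]
    rw [key]; congr 1; abel
end

section
/- Let (Â₁, {N̂¹_ω}) and (Â₂, {N̂²_ω}) be two isomorphic abelian extensions of the Nijenhuis family Ω-associative algebra (A, {N_ω}) by (M, {N_{M,ω}}), with isomorphism ζ fixing M and covering the identity on A. If s¹ is a section of the first extension, then s² := ζ ∘ s¹ is a section of the second, and the associated 2-cocycles coincide: ψ²_{α,β}(a,b) = ψ¹_{α,β}(a,b) and χ²_ω(a) = χ¹_ω(a) for all a, b ∈ A and α, β, ω ∈ Ω, where ψ^i_{α,β}(a,b) = s^i_α(a) ·_{α,β} s^i_β(b) − s^i_{αβ}(a ·_{α,β} b) and χ^i_ω(a) = N̂^i_ω(s^i_ω(a)) − s^i_ω(N_ω(a)). -/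
/-- Two isomorphic abelian extensions give the same 2-cocycle: if `ζ` is an
isomorphism of extensions fixing `M` and covering the identity on `A`, and `s¹`
is a section of the first extension, then `s² := ζ ∘ s¹` is a section of the
second, and the associated cocycles `(ψ, χ)` coincide (as elements of `M`). -/
theorem isomorphic_extensions_same_cocycle
    {k : Type*} [Field k] {Ω : Type*} [Semigroup Ω]
    {A : Type*} [AddCommGroup A] [Module k A]
    {Ahat₁ : Type*} [AddCommGroup Ahat₁] [Module k Ahat₁]
    {Ahat₂ : Type*} [AddCommGroup Ahat₂] [Module k Ahat₂]
    {M : Type*} [AddCommGroup M] [Module k M]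
    (μ : Ω → Ω → A →ₗ[k] A →ₗ[k] A)
    (hassoc : ∀ (α β γ : Ω) (a b c : A),
      μ (α * β) γ (μ α β a b) c = μ α (β * γ) a (μ β γ b c))
    (N : Ω → A →ₗ[k] A) (hN : NijenhuisFamily μ N)
    (NM : Ω → M →ₗ[k] M)
    -- the first extension
    (μh₁ : Ω → Ω → Ahat₁ →ₗ[k] Ahat₁ →ₗ[k] Ahat₁)
    (hassoch₁ : ∀ (α β γ : Ω) (x y z : Ahat₁),
      μh₁ (α * β) γ (μh₁ α β x y) z = μh₁ α (β * γ) x (μh₁ β γ y z))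
    (Nh₁ : Ω → Ahat₁ →ₗ[k] Ahat₁) (hNh₁ : NijenhuisFamily μh₁ Nh₁)
    (i₁ : M →ₗ[k] Ahat₁) (π₁ : Ahat₁ →ₗ[k] A)
    (hi₁ : Function.Injective i₁) (hπ₁ : Function.Surjective π₁)
    (hexact₁ : LinearMap.range i₁ = LinearMap.ker π₁)
    (hπmul₁ : ∀ (α β : Ω) (x y : Ahat₁), π₁ (μh₁ α β x y) = μ α β (π₁ x) (π₁ y))
    (hπN₁ : ∀ (ω : Ω) (x : Ahat₁), π₁ (Nh₁ ω x) = N ω (π₁ x))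
    (hiN₁ : ∀ (ω : Ω) (m : M), Nh₁ ω (i₁ m) = i₁ (NM ω m))
    (hMzero₁ : ∀ (α β : Ω) (u v : M), μh₁ α β (i₁ u) (i₁ v) = 0)
    -- the second extension
    (μh₂ : Ω → Ω → Ahat₂ →ₗ[k] Ahat₂ →ₗ[k] Ahat₂)
    (hassoch₂ : ∀ (α β γ : Ω) (x y z : Ahat₂),
      μh₂ (α * β) γ (μh₂ α β x y) z = μh₂ α (β * γ) x (μh₂ β γ y z))
    (Nh₂ : Ω → Ahat₂ →ₗ[k] Ahat₂) (hNh₂ : NijenhuisFamily μh₂ Nh₂)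
    (i₂ : M →ₗ[k] Ahat₂) (π₂ : Ahat₂ →ₗ[k] A)
    (hi₂ : Function.Injective i₂) (hπ₂ : Function.Surjective π₂)
    (hexact₂ : LinearMap.range i₂ = LinearMap.ker π₂)
    (hπmul₂ : ∀ (α β : Ω) (x y : Ahat₂), π₂ (μh₂ α β x y) = μ α β (π₂ x) (π₂ y))
    (hπN₂ : ∀ (ω : Ω) (x : Ahat₂), π₂ (Nh₂ ω x) = N ω (π₂ x))
    (hiN₂ : ∀ (ω : Ω) (m : M), Nh₂ ω (i₂ m) = i₂ (NM ω m))
    (hMzero₂ : ∀ (α β : Ω) (u v : M), μh₂ α β (i₂ u) (i₂ v) = 0)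
    -- the isomorphism of extensions
    (ζ : Ω → Ahat₁ →ₗ[k] Ahat₂)
    (hζbij : ∀ ω : Ω, Function.Bijective (ζ ω))
    (hζmul : ∀ (α β : Ω) (x y : Ahat₁),
      ζ (α * β) (μh₁ α β x y) = μh₂ α β (ζ α x) (ζ β y))
    (hζN : ∀ (ω : Ω) (x : Ahat₁), ζ ω (Nh₁ ω x) = Nh₂ ω (ζ ω x))
    (hζi : ∀ (ω : Ω) (m : M), ζ ω (i₁ m) = i₂ m)
    (hζπ : ∀ (ω : Ω) (x : Ahat₁), π₂ (ζ ω x) = π₁ x)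
    -- a section of the first extension
    (s₁ : Ω → A →ₗ[k] Ahat₁) (hs₁ : ∀ (ω : Ω) (a : A), π₁ (s₁ ω a) = a) :
    -- ζ ∘ s₁ is a section of the second extension
    (∀ (ω : Ω) (a : A), π₂ (ζ ω (s₁ ω a)) = a) ∧
    -- ψ² = ψ¹ as elements of M
    (∀ (α β : Ω) (a b : A), ∃ m : M,
      i₁ m = μh₁ α β (s₁ α a) (s₁ β b) - s₁ (α * β) (μ α β a b) ∧
      i₂ m = μh₂ α β (ζ α (s₁ α a)) (ζ β (s₁ β b))
               - ζ (α * β) (s₁ (α * β) (μ α β a b))) ∧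
    -- χ² = χ¹ as elements of M
    (∀ (ω : Ω) (a : A), ∃ m : M,
      i₁ m = Nh₁ ω (s₁ ω a) - s₁ ω (N ω a) ∧
      i₂ m = Nh₂ ω (ζ ω (s₁ ω a)) - ζ ω (s₁ ω (N ω a))) := by
  refine ⟨fun ω a => by rw [hζπ, hs₁], ?_, ?_⟩
  · intro α β a b
    have hker : μh₁ α β (s₁ α a) (s₁ β b) - s₁ (α * β) (μ α β a b) ∈ LinearMap.ker π₁ := by
      simp [LinearMap.mem_ker, hπmul₁, hs₁]
    rw [← hexact₁] at hker
    obtain ⟨m, hm⟩ := hker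
    refine ⟨m, hm, ?_⟩
    have := congrArg (ζ (α * β)) hm
    rw [hζi, map_sub, hζmul] at this
    exact this
  · intro ω a
    have hker : Nh₁ ω (s₁ ω a) - s₁ ω (N ω a) ∈ LinearMap.ker π₁ := by
      simp [LinearMap.mem_ker, hπN₁, hs₁]
    rw [← hexact₁] at hker
    obtain ⟨m, hm⟩ := hker
    refine ⟨m, hm, ?_⟩
    have := congrArg (ζ ω) hm
    rw [hζi, map_sub, hζN] at this
    exact this
end
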